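/- Let (Z_U, Z_V) be a random vector on the unit circle Ω = {z ∈ ℂ : |z| = 1} with density c(z_u, z_v) = (1/(4π²)) (1-|ψ|²)/|1 - ψ z_v \bar{z_u}|² (the BC₊(ψ) model, |ψ| < 1). Then for integers j, k ∈ ℤ, E(Z_U^j Z_V^k) = ψ^j if j = -k ≥ 0, equals \bar{ψ}^{-j} if j = -k < 0, and equals 0 otherwise. -/

import Mathlib

open MeasureTheory Real
open scoped ENNReal NNReal

/-- Arc-length measure on the unit circle `Ω = {z : ℂ | |z| = 1}`, obtained as the
image of Lebesgue measure on `(0, 2π]` under `θ ↦ exp(iθ)`; it has total mass `2π`. -/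
noncomputable def circleMeasure : Measure ℂ :=
  Measure.map (fun θ : ℝ => Complex.exp (θ * Complex.I))
    (volume.restrict (Set.Ioc 0 (2 * Real.pi)))

/-- The density of the `BC₊(ψ)` model on `Ω × Ω`:
`c(z_u, z_v) = (1/(4π²)) (1-|ψ|²)/|1 - ψ z_v conj z_u|²`. -/
noncomputable def bcDensity (ψ : ℂ) (p : ℂ × ℂ) : ℝ :=
  (1 / (4 * Real.pi ^ 2)) * (1 - ‖ψ‖ ^ 2)
    / ‖1 - ψ * p.2 * (starRingEnd ℂ) p.1‖ ^ 2

/-- The `BC₊(ψ)` distribution on the torus `Ω × Ω`. -/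
noncomputable def BCplus (ψ : ℂ) : Measure (ℂ × ℂ) :=
  (circleMeasure.prod circleMeasure).withDensity
    (fun p => ENNReal.ofReal (bcDensity ψ p))

section Helpers
open Complex

lemma hwz (n : ℤ) (θ : ℝ) : Complex.exp (θ * Complex.I) ^ n = Complex.exp ((n * Complex.I) * θ) := by
  rw [← Complex.exp_int_mul]; congr 1; ring

lemma absE (n : ℤ) (θ : ℝ) : ‖Complex.exp ((n * Complex.I) * θ)‖ = 1 := by
  rw [← hwz, norm_zpow, Complex.norm_exp_ofReal_mul_I, one_zpow]


lemma abs_sq_complex (z : ℂ) : (((‖z‖ : ℝ) : ℂ)) ^ 2 = z * (starRingEnd ℂ) z := by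
  rw [Complex.mul_conj]; norm_cast; rw [Complex.normSq_eq_norm_sq]

lemma key_id (q w : ℂ) (hq : ‖q‖ < 1) (hw : ‖w‖ = 1) :
    (((1 - ‖q‖ ^ 2) / ‖1 - q * w‖ ^ 2 : ℝ) : ℂ)
      = (1 - q * w)⁻¹ + (starRingEnd ℂ) q * (starRingEnd ℂ) w * (1 - (starRingEnd ℂ) q * (starRingEnd ℂ) w)⁻¹ := by
  have h1 : ‖q * w‖ < 1 := by rw [norm_mul, hw, mul_one]; exact hq
  have hd : 1 - q * w ≠ 0 := by
    intro h
    rw [sub_eq_zero] at h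
    rw [← h] at h1; simp at h1
  have hd2 : 1 - (starRingEnd ℂ) q * (starRingEnd ℂ) w ≠ 0 := by
    intro h
    apply hd
    have := congrArg (starRingEnd ℂ) h
    simpa using this
  have hq2 := abs_sq_complex q
  have hD : (((‖1 - q * w‖ : ℝ) : ℂ)) ^ 2
      = (1 - q * w) * (1 - (starRingEnd ℂ) q * (starRingEnd ℂ) w) := by
    rw [abs_sq_complex]; simp [map_sub, map_mul]
  have hww : w * (starRingEnd ℂ) w = 1 := by
    have := abs_sq_complex w
    rw [hw] at this; simpa using this.symm
  push_cast
  rw [hq2, hD]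
  field_simp
  ring_nf
  linear_combination (q*(starRingEnd ℂ) q) * hww

section
variable (q : ℂ) (k : ℤ)
noncomputable def fser (m : ℕ) (θ : ℝ) : ℂ :=
  Complex.exp (((k + m : ℤ) * Complex.I) * θ) * q ^ m
    + Complex.exp (((k - (m+1) : ℤ) * Complex.I) * θ) * (starRingEnd ℂ) q ^ (m+1)
end

lemma fser_eq (q : ℂ) (hq : ‖q‖ < 1) (k : ℤ) (θ : ℝ) :
    ∑' m : ℕ, fser q k m θ
      = Complex.exp (θ * Complex.I) ^ k *
        (((1 - ‖q‖ ^ 2) / ‖1 - q * Complex.exp (θ * Complex.I)‖ ^ 2 : ℝ) : ℂ) := by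
  set w := Complex.exp (θ * Complex.I) with hwdef
  have hw : ‖w‖ = 1 := Complex.norm_exp_ofReal_mul_I θ
  have hw0 : w ≠ 0 := Complex.exp_ne_zero _
  have h1 : ‖q * w‖ < 1 := by rw [norm_mul, hw, mul_one]; exact hq
  have h2 : ‖(starRingEnd ℂ) q * (starRingEnd ℂ) w‖ < 1 := by
    rw [norm_mul, Complex.norm_conj, Complex.norm_conj, hw, mul_one]; exact hq
  have hww : w * (starRingEnd ℂ) w = 1 := by
    have := Complex.mul_conj w
    rw [this]; norm_cast; rw [Complex.normSq_eq_norm_sq, hw]; norm_num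
  have hcw : (starRingEnd ℂ) w = w⁻¹ := by
    field_simp [hw0]; linear_combination hww
  have s1 : HasSum (fun m : ℕ => w ^ k * (q * w) ^ m) (w ^ k * (1 - q * w)⁻¹) :=
    (hasSum_geometric_of_norm_lt_one h1).mul_left _
  have s2 : HasSum
      (fun m : ℕ => w ^ k * ((starRingEnd ℂ) q * (starRingEnd ℂ) w) * ((starRingEnd ℂ) q * (starRingEnd ℂ) w) ^ m)
      (w ^ k * ((starRingEnd ℂ) q * (starRingEnd ℂ) w) * (1 - (starRingEnd ℂ) q * (starRingEnd ℂ) w)⁻¹) :=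
    (hasSum_geometric_of_norm_lt_one h2).mul_left _
  have hsum := (s1.add s2)
  have heq : (fun m : ℕ => w ^ k * (q * w) ^ m
      + w ^ k * ((starRingEnd ℂ) q * (starRingEnd ℂ) w) * ((starRingEnd ℂ) q * (starRingEnd ℂ) w) ^ m)
      = fun m => fser q k m θ := by
    funext m
    unfold fser
    rw [← hwz, ← hwz, ← hwdef]
    rw [zpow_add₀ hw0, zpow_sub₀ hw0, zpow_natCast]
    have hc : ((m : ℤ) + 1) = ((m + 1 : ℕ) : ℤ) := by push_cast; ring
    rw [hc, zpow_natCast, mul_pow, hcw]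
    rw [mul_pow]
    field_simp
    have hwm : w ^ m * w⁻¹ ^ m = 1 := by rw [← mul_pow, mul_inv_cancel₀ hw0, one_pow]
    linear_combination (w * (starRingEnd ℂ) q * (starRingEnd ℂ) q ^ m) * hwm
  rw [heq] at hsum
  rw [hsum.tsum_eq, key_id q w hq hw]
  ring

lemma intE (n : ℤ) :
    ∫ θ : ℝ in Set.Ioc 0 (2*π), Complex.exp ((n * Complex.I) * θ)
      = if n = 0 then ((2*π : ℝ) : ℂ) else 0 := by
  rw [← intervalIntegral.integral_of_le (by positivity : (0:ℝ) ≤ 2*π)]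
  rcases eq_or_ne n 0 with h | h
  · simp [h]
  · rw [integral_exp_mul_complex (by simp [Complex.ext_iff, h] : (n:ℂ) * Complex.I ≠ 0)]
    have : (n:ℂ) * Complex.I * (2*π:ℝ) = n * (2*π*Complex.I) := by push_cast; ring
    rw [this, Complex.exp_int_mul_two_pi_mul_I]
    simp [h]

lemma intgE (n : ℤ) (c : ℂ) :
    IntegrableOn (fun θ : ℝ => Complex.exp ((n * Complex.I) * θ) * c) (Set.Ioc 0 (2*π)) := by
  apply Continuous.integrableOn_Ioc
  continuity

lemma fser_norm (q : ℂ) (hq : ‖q‖ < 1) (k : ℤ) (m : ℕ) (θ : ℝ) :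
    ‖fser q k m θ‖ ≤ 2 * ‖q‖ ^ m := by
  have h1 : ‖Complex.exp (((k + m : ℤ) * Complex.I) * θ) * q ^ m‖ = ‖q‖ ^ m := by
    rw [norm_mul, absE, one_mul, norm_pow]
  have h2 : ‖Complex.exp (((k - (m+1) : ℤ) * Complex.I) * θ) * (starRingEnd ℂ) q ^ (m+1)‖
      = ‖q‖ ^ (m+1) := by
    rw [norm_mul, absE, one_mul, norm_pow, Complex.norm_conj]
  calc ‖fser q k m θ‖ ≤ ‖q‖ ^ m + ‖q‖ ^ (m+1) := by
        rw [← h1, ← h2]; exact norm_add_le _ _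
    _ ≤ 2 * ‖q‖ ^ m := by
        have : ‖q‖ ^ (m+1) ≤ ‖q‖ ^ m := by
          apply pow_le_pow_of_le_one (norm_nonneg q) hq.le
          omega
        nlinarith [pow_nonneg (norm_nonneg q) m]

lemma poisson (q : ℂ) (hq : ‖q‖ < 1) (k : ℤ) :
    ∫ θ : ℝ in Set.Ioc 0 (2*π),
      Complex.exp (θ * Complex.I) ^ k *
        (((1 - ‖q‖ ^ 2) / ‖1 - q * Complex.exp (θ * Complex.I)‖ ^ 2 : ℝ) : ℂ)
      = (2*π) * (if k ≤ 0 then q ^ (-k).toNat else (starRingEnd ℂ) q ^ k.toNat) := by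
  have hmeas : ∀ m : ℕ, AEStronglyMeasurable (fser q k m)
      (volume.restrict (Set.Ioc 0 (2*π))) := by
    intro m
    apply Continuous.aestronglyMeasurable
    unfold fser
    continuity
  have hsummable : Summable (fun m : ℕ => 2 * ‖q‖ ^ m * (2*π)) := by
    apply Summable.mul_right
    exact (summable_geometric_of_lt_one (norm_nonneg q) hq).mul_left 2
  have hbound : ∑' m : ℕ, ∫⁻ θ in Set.Ioc 0 (2*π), ‖fser q k m θ‖ₑ ≠ ⊤ := by
    have step : ∀ m : ℕ, ∫⁻ θ in Set.Ioc 0 (2*π), ‖fser q k m θ‖ₑ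
        ≤ ENNReal.ofReal (2 * ‖q‖ ^ m * (2*π)) := by
      intro m
      calc ∫⁻ θ in Set.Ioc 0 (2*π), ‖fser q k m θ‖ₑ
          ≤ ∫⁻ _ in Set.Ioc 0 (2*π), ENNReal.ofReal (2 * ‖q‖ ^ m) := by
            apply lintegral_mono
            intro θ
            simp only
            rw [← ofReal_norm_eq_enorm]
            exact ENNReal.ofReal_le_ofReal (fser_norm q hq k m θ)
        _ = ENNReal.ofReal (2 * ‖q‖ ^ m) * ENNReal.ofReal (2*π) := by
            rw [setLIntegral_const, Real.volume_Ioc]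
            norm_num
        _ = ENNReal.ofReal (2 * ‖q‖ ^ m * (2*π)) := by
            rw [← ENNReal.ofReal_mul (by positivity)]
    apply ne_top_of_le_ne_top _ (ENNReal.tsum_le_tsum step)
    rw [← ENNReal.ofReal_tsum_of_nonneg (fun m => by positivity) hsummable]
    exact ENNReal.ofReal_ne_top
  have hswap := integral_tsum hmeas hbound
  have hpt : ∀ θ : ℝ, Complex.exp (θ * Complex.I) ^ k *
        (((1 - ‖q‖ ^ 2) / ‖1 - q * Complex.exp (θ * Complex.I)‖ ^ 2 : ℝ) : ℂ)
      = ∑' m : ℕ, fser q k m θ := fun θ => (fser_eq q hq k θ).symm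
  calc ∫ θ in Set.Ioc 0 (2*π), Complex.exp (θ * Complex.I) ^ k *
        (((1 - ‖q‖ ^ 2) / ‖1 - q * Complex.exp (θ * Complex.I)‖ ^ 2 : ℝ) : ℂ)
      = ∫ θ in Set.Ioc 0 (2*π), ∑' m : ℕ, fser q k m θ := by
        apply integral_congr_ae
        filter_upwards with θ using hpt θ
    _ = ∑' m : ℕ, ∫ θ in Set.Ioc 0 (2*π), fser q k m θ := hswap
    _ = ∑' m : ℕ, ((if (k + m : ℤ) = 0 then ((2*π:ℝ):ℂ) else 0) * q ^ m
          + (if (k - (m+1) : ℤ) = 0 then ((2*π:ℝ):ℂ) else 0) * (starRingEnd ℂ) q ^ (m+1)) := by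
        congr 1
        funext m
        unfold fser
        rw [integral_add (intgE _ _) (intgE _ _), integral_mul_const, integral_mul_const,
          intE, intE]
    _ = (2*π) * (if k ≤ 0 then q ^ (-k).toNat else (starRingEnd ℂ) q ^ k.toNat) := by
        rcases le_or_gt k 0 with hk | hk
        · rw [tsum_eq_single (-k).toNat]
          · have h1 : (k + ((-k).toNat : ℤ)) = 0 := by omega
            have h2 : (k - (((-k).toNat : ℕ) + 1 : ℕ)) ≠ 0 := by push_cast; omega
            rw [if_pos h1]
            rw [if_neg (by push_cast at h2 ⊢; omega)]
            simp [hk]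
          · intro m hm
            rw [if_neg (by omega), if_neg (by push_cast; omega)]
            simp
        · rw [tsum_eq_single (k-1).toNat]
          · have h1 : (k + ((k-1).toNat : ℤ)) ≠ 0 := by omega
            have h2 : (k - (((k-1).toNat : ℕ) + 1 : ℕ)) = 0 := by push_cast; omega
            rw [if_neg h1, if_pos (by push_cast at h2 ⊢; omega)]
            have h3 : (k-1).toNat + 1 = k.toNat := by omega
            rw [if_neg (by omega), h3]
            push_cast
            ring
          · intro m hm
            rw [if_neg (by omega), if_neg (by push_cast; omega)]
            simp

lemma measurable_zpowC (n : ℤ) : Measurable (fun z : ℂ => z ^ n) := by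
  cases n with
  | ofNat m => simpa using measurable_id.pow_const (m : ℕ)
  | negSucc m =>
      simpa [zpow_negSucc] using
        ((measurable_id : Measurable (id : ℂ → ℂ)).pow_const (m+1))

lemma eC_meas : Measurable (fun θ : ℝ => Complex.exp (θ * Complex.I)) := by
  fun_prop

lemma bcDensity_meas (ψ : ℂ) : Measurable (bcDensity ψ) := by
  unfold bcDensity
  have h : Measurable (fun p : ℂ × ℂ => ‖1 - ψ * p.2 * (starRingEnd ℂ) p.1‖) :=
    continuous_norm.measurable.comp
      (measurable_const.sub ((measurable_const.mul measurable_snd).mul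
        (Complex.continuous_conj.measurable.comp measurable_fst)))
  exact measurable_const.div ((h.pow_const 2))

lemma bcDensity_eq (ψ z w : ℂ) (hz : ‖z‖ = 1) :
    bcDensity ψ (z, w) = (1/(4*π^2)) * ((1 - ‖ψ * (starRingEnd ℂ) z‖ ^ 2)
      / ‖1 - (ψ * (starRingEnd ℂ) z) * w‖ ^ 2) := by
  unfold bcDensity
  rw [mul_div_assoc]
  congr 2
  · rw [norm_mul, Complex.norm_conj, hz, mul_one]
  · congr 2
    ring

lemma kernel_bounds (q w : ℂ) (hq : ‖q‖ < 1) (hw : ‖w‖ = 1) :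
    (1 - ‖q‖ ^ 2) / (1 + ‖q‖) ^ 2
      ≤ (1 - ‖q‖ ^ 2) / ‖1 - q * w‖ ^ 2
    ∧ (1 - ‖q‖ ^ 2) / ‖1 - q * w‖ ^ 2
      ≤ (1 - ‖q‖ ^ 2) / (1 - ‖q‖) ^ 2 := by
  have h0 : (0:ℝ) ≤ ‖q‖ := norm_nonneg q
  have hnum : (0:ℝ) ≤ 1 - ‖q‖ ^ 2 := by nlinarith
  have hub : ‖1 - q * w‖ ≤ 1 + ‖q‖ := by
    have := norm_sub_le (1 : ℂ) (q * w)
    simp only [map_one, norm_mul, hw, mul_one, norm_one] at this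
    simpa [norm_mul, hw] using this
  have hlb : 1 - ‖q‖ ≤ ‖1 - q * w‖ := by
    have := norm_sub_norm_le (1 : ℂ) (q * w)
    simp only [map_one, norm_mul, hw, mul_one, norm_one] at this
    simpa [norm_mul, hw] using this
  have hlbpos : (0:ℝ) < 1 - ‖q‖ := by linarith
  constructor
  · apply div_le_div_of_nonneg_left hnum
    · nlinarith
    · nlinarith [norm_nonneg (1 - q * w)]
  · apply div_le_div_of_nonneg_left hnum
    · positivity
    · nlinarith [norm_nonneg (1 - q * w)]

end Helpers

lemma conj_w (θ : ℝ) : (starRingEnd ℂ) (Complex.exp (θ * Complex.I))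
    = (Complex.exp (θ * Complex.I))⁻¹ := by
  rw [← Complex.exp_conj, ← Complex.exp_neg]
  congr 1
  simp [Complex.ext_iff]

lemma inner_int (ψ : ℂ) (hψ : ‖ψ‖ < 1) (k : ℤ) (θ : ℝ) :
    ∫ φ in Set.Ioc 0 (2*π),
      ((bcDensity ψ (Complex.exp (θ * Complex.I), Complex.exp (φ * Complex.I)) : ℝ) : ℂ)
        * Complex.exp (φ * Complex.I) ^ k
      = ((1/(2*π) : ℝ) : ℂ)
          * (if k ≤ 0 then ψ ^ (-k).toNat else (starRingEnd ℂ) ψ ^ k.toNat)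
          * Complex.exp ((k * Complex.I) * θ) := by
  have hw : ‖Complex.exp (θ * Complex.I)‖ = 1 := Complex.norm_exp_ofReal_mul_I θ
  have hw0 : Complex.exp (θ * Complex.I) ≠ 0 := Complex.exp_ne_zero _
  set w := Complex.exp (θ * Complex.I) with hwdef
  set q := ψ * (starRingEnd ℂ) w with hqdef
  have hq : ‖q‖ < 1 := by
    rw [hqdef, norm_mul, Complex.norm_conj, hw, mul_one]; exact hψ
  have hrw : ∀ φ : ℝ, ((bcDensity ψ (w, Complex.exp (φ * Complex.I)) : ℝ) : ℂ)
        * Complex.exp (φ * Complex.I) ^ k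
      = ((1/(4*π^2) : ℝ) : ℂ) * (Complex.exp (φ * Complex.I) ^ k *
          (((1 - ‖q‖ ^ 2) /
            ‖1 - q * Complex.exp (φ * Complex.I)‖ ^ 2 : ℝ) : ℂ)) := by
    intro φ
    rw [bcDensity_eq ψ w _ hw, ← hqdef]
    push_cast
    ring
  simp_rw [hrw]
  rw [integral_const_mul, poisson q hq k]
  have hgsel : (if k ≤ 0 then q ^ (-k).toNat else (starRingEnd ℂ) q ^ k.toNat)
      = (if k ≤ 0 then ψ ^ (-k).toNat else (starRingEnd ℂ) ψ ^ k.toNat)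
          * Complex.exp ((k * Complex.I) * θ) := by
    rcases le_or_gt k 0 with hk | hk
    · rw [if_pos hk, if_pos hk, hqdef, mul_pow]
      congr 1
      rw [conj_w, ← hwdef, inv_pow, ← zpow_natCast w, ← zpow_neg,
        (show -(((-k).toNat : ℕ) : ℤ) = k by omega), hwz]
    · rw [if_neg (not_le.mpr hk), if_neg (not_le.mpr hk), hqdef, map_mul, mul_pow]
      congr 1
      rw [Complex.conj_conj, ← zpow_natCast w,
        (show ((k.toNat : ℕ) : ℤ) = k by omega), hwdef, hwz]
  rw [hgsel]
  have hπ : (π:ℝ) ≠ 0 := pi_ne_zero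
  have hπC : (π:ℂ) ≠ 0 := by exact_mod_cast hπ
  push_cast
  rcases le_or_gt k 0 with hk | hk
  · simp only [hk, if_true]
    field_simp
    ring
  · simp only [not_le.mpr hk, if_false]
    field_simp
    ring

/-- moments of `BC₊(ψ)`: for `j, k ∈ ℤ`,
`E(Z_U^j Z_V^k) = ψ^j` if `j = -k ≥ 0`, `conj(ψ)^{-j}` if `j = -k < 0`, and `0` otherwise. -/
theorem bcplus_moments {α : Type*} [MeasurableSpace α] (P : Measure α)
    [IsProbabilityMeasure P] (ψ : ℂ) (hψ : ‖ψ‖ < 1)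
    (ZU ZV : α → ℂ)
    (hlaw : Measure.map (fun ω => (ZU ω, ZV ω)) P = BCplus ψ) (j k : ℤ) :
    ∫ ω, ZU ω ^ j * ZV ω ^ k ∂P
      = if j = -k then
          (if 0 ≤ j then ψ ^ j.toNat else (starRingEnd ℂ) ψ ^ (-j).toNat)
        else 0 := by
  have hπ : (0:ℝ) < π := pi_pos
  have habs0 : (0:ℝ) ≤ ‖ψ‖ := norm_nonneg ψ
  set ν := volume.restrict (Set.Ioc 0 (2*π)) with hν
  haveI : IsFiniteMeasure ν := by
    constructor
    rw [hν, Measure.restrict_apply_univ, Real.volume_Ioc]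
    exact ENNReal.ofReal_lt_top
  have hprodmap : circleMeasure.prod circleMeasure
      = Measure.map (Prod.map (fun θ:ℝ => Complex.exp (θ*Complex.I))
          (fun θ:ℝ => Complex.exp (θ*Complex.I))) (ν.prod ν) := by
    rw [circleMeasure, ← hν]
    exact Measure.map_prod_map _ _ eC_meas eC_meas
  have hg_meas : Measurable (fun p : ℂ × ℂ => ENNReal.ofReal (bcDensity ψ p)) :=
    (bcDensity_meas ψ).ennreal_ofReal
  -- BCplus ψ ≠ 0
  have hBC0 : BCplus ψ ≠ 0 := by
    intro h0
    have huniv : (BCplus ψ) Set.univ = 0 := by rw [h0]; simp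
    rw [BCplus, withDensity_apply _ MeasurableSet.univ, setLIntegral_univ, hprodmap,
      lintegral_map hg_meas (eC_meas.prodMap eC_meas)] at huniv
    set c₀ := (1/(4*π^2)) * ((1 - ‖ψ‖^2) / (1 + ‖ψ‖)^2) with hc₀
    have hc₀pos : 0 < c₀ := by
      rw [hc₀]
      apply mul_pos (by positivity)
      apply div_pos (by nlinarith) (by positivity)
    have hbd : ∀ x : ℝ × ℝ, ENNReal.ofReal c₀
        ≤ ENNReal.ofReal (bcDensity ψ (Prod.map
            (fun θ:ℝ => Complex.exp (θ*Complex.I)) (fun θ:ℝ => Complex.exp (θ*Complex.I)) x)) := by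
      intro x
      apply ENNReal.ofReal_le_ofReal
      rw [Prod.map_apply, bcDensity_eq ψ _ _ (Complex.norm_exp_ofReal_mul_I _)]
      set q := ψ * (starRingEnd ℂ) (Complex.exp (x.1*Complex.I)) with hqd
      have habs : ‖q‖ = ‖ψ‖ := by
        rw [hqd, norm_mul, Complex.norm_conj, Complex.norm_exp_ofReal_mul_I, mul_one]
      have hq1 : ‖q‖ < 1 := by rw [habs]; exact hψ
      have := (kernel_bounds q (Complex.exp (x.2*Complex.I)) hq1
        (Complex.norm_exp_ofReal_mul_I _)).1
      rw [habs] at this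
      rw [hc₀, habs]
      apply mul_le_mul_of_nonneg_left this (by positivity)
    have hlow : ENNReal.ofReal c₀ * ((ν.prod ν) Set.univ)
        ≤ ∫⁻ x, ENNReal.ofReal (bcDensity ψ (Prod.map
            (fun θ:ℝ => Complex.exp (θ*Complex.I)) (fun θ:ℝ => Complex.exp (θ*Complex.I)) x))
            ∂(ν.prod ν) := by
      rw [← lintegral_const]
      exact lintegral_mono hbd
    rw [huniv] at hlow
    have hν2 : (ν.prod ν) Set.univ = ENNReal.ofReal (2*π) * ENNReal.ofReal (2*π) := by
      rw [← Set.univ_prod_univ, Measure.prod_prod, hν, Measure.restrict_apply_univ,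
        Real.volume_Ioc]
      norm_num
    rw [hν2, nonpos_iff_eq_zero, mul_eq_zero, mul_eq_zero] at hlow
    rcases hlow with h | h
    · exact absurd h (by simp [ENNReal.ofReal_eq_zero]; linarith)
    · rcases h with h | h <;>
        exact absurd h (by simp [ENNReal.ofReal_eq_zero]; linarith)
  have hpair : AEMeasurable (fun ω => (ZU ω, ZV ω)) P := by
    by_contra h
    rw [Measure.map_of_not_aemeasurable h] at hlaw
    exact hBC0 hlaw.symm
  have hFmeas : Measurable (fun p : ℂ × ℂ => p.1 ^ j * p.2 ^ k) :=
    ((measurable_zpowC j).comp measurable_fst).mul ((measurable_zpowC k).comp measurable_snd)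
  have step1 : ∫ ω, ZU ω ^ j * ZV ω ^ k ∂P = ∫ p : ℂ × ℂ, p.1 ^ j * p.2 ^ k ∂(BCplus ψ) := by
    rw [← hlaw, integral_map hpair hFmeas.aestronglyMeasurable]
  have hnn : ∀ p, 0 ≤ bcDensity ψ p := by
    intro p
    unfold bcDensity
    apply div_nonneg _ (by positivity)
    apply mul_nonneg (by positivity)
    nlinarith
  have step2 : ∫ p : ℂ × ℂ, p.1 ^ j * p.2 ^ k ∂(BCplus ψ)
      = ∫ p : ℂ × ℂ, ((bcDensity ψ p : ℝ):ℂ) * (p.1^j*p.2^k)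
          ∂(circleMeasure.prod circleMeasure) := by
    rw [BCplus]
    have hid : (fun p : ℂ × ℂ => ENNReal.ofReal (bcDensity ψ p))
        = (fun p : ℂ × ℂ => ((fun p => (bcDensity ψ p).toNNReal) p : ℝ≥0∞)) := rfl
    rw [hid, integral_withDensity_eq_integral_smul ((bcDensity_meas ψ).real_toNNReal)]
    congr 1
    funext p
    rw [NNReal.smul_def, Real.coe_toNNReal _ (hnn p), Complex.real_smul]
  have hGmeas : Measurable (fun p : ℂ × ℂ => ((bcDensity ψ p : ℝ):ℂ) * (p.1^j*p.2^k)) :=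
    (Complex.measurable_ofReal.comp (bcDensity_meas ψ)).mul hFmeas
  rw [step1, step2, hprodmap,
    integral_map (eC_meas.prodMap eC_meas).aemeasurable hGmeas.aestronglyMeasurable]
  -- now an integral over ℝ × ℝ
  set G : ℝ × ℝ → ℂ := fun x =>
    ((bcDensity ψ (Complex.exp (x.1*Complex.I), Complex.exp (x.2*Complex.I)) : ℝ):ℂ)
      * ((Complex.exp (x.1*Complex.I))^j * (Complex.exp (x.2*Complex.I))^k) with hG
  have hGmeas' : Measurable G := hGmeas.comp (eC_meas.prodMap eC_meas)
  have hGint : Integrable G (ν.prod ν) := by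
    set c₁ := (1/(4*π^2)) * ((1 - ‖ψ‖^2) / (1 - ‖ψ‖)^2) with hc₁
    apply Integrable.mono' (integrable_const c₁) hGmeas'.aestronglyMeasurable
    filter_upwards with x
    rw [hG]
    simp only
    rw [norm_mul, norm_mul,
      norm_zpow, norm_zpow, Complex.norm_exp_ofReal_mul_I, Complex.norm_exp_ofReal_mul_I,
      one_zpow, one_zpow, Complex.norm_real, Real.norm_eq_abs, mul_one, mul_one]
    rw [abs_of_nonneg (hnn _), bcDensity_eq ψ _ _ (Complex.norm_exp_ofReal_mul_I _)]
    set q := ψ * (starRingEnd ℂ) (Complex.exp (x.1*Complex.I)) with hqd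
    have habs : ‖q‖ = ‖ψ‖ := by
      rw [hqd, norm_mul, Complex.norm_conj, Complex.norm_exp_ofReal_mul_I, mul_one]
    have hq1 : ‖q‖ < 1 := by rw [habs]; exact hψ
    have := (kernel_bounds q (Complex.exp (x.2*Complex.I)) hq1
      (Complex.norm_exp_ofReal_mul_I _)).2
    rw [habs] at this
    rw [hc₁, habs]
    exact mul_le_mul_of_nonneg_left this (by positivity)
  rw [show (fun x : ℝ × ℝ =>
      ((bcDensity ψ (Prod.map (fun θ:ℝ => Complex.exp (θ*Complex.I))
          (fun θ:ℝ => Complex.exp (θ*Complex.I)) x) : ℝ):ℂ)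
        * ((Prod.map (fun θ:ℝ => Complex.exp (θ*Complex.I))
            (fun θ:ℝ => Complex.exp (θ*Complex.I)) x).1^j
          * (Prod.map (fun θ:ℝ => Complex.exp (θ*Complex.I))
              (fun θ:ℝ => Complex.exp (θ*Complex.I)) x).2^k)) = G from rfl]
  rw [integral_prod G hGint]
  have hinner : ∀ θ : ℝ, ∫ φ, G (θ, φ) ∂ν
      = Complex.exp ((j * Complex.I) * θ) *
          (((1/(2*π) : ℝ) : ℂ)
            * (if k ≤ 0 then ψ ^ (-k).toNat else (starRingEnd ℂ) ψ ^ k.toNat)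
            * Complex.exp ((k * Complex.I) * θ)) := by
    intro θ
    have hsplit : ∀ φ : ℝ, G (θ, φ) = (Complex.exp (θ*Complex.I))^j *
        (((bcDensity ψ (Complex.exp (θ*Complex.I), Complex.exp (φ*Complex.I)) : ℝ):ℂ)
          * (Complex.exp (φ*Complex.I))^k) := by
      intro φ
      rw [hG]
      simp only
      ring
    simp_rw [hsplit]
    rw [integral_const_mul, hν, inner_int ψ hψ k θ, hwz]
  simp_rw [hinner]
  have hcomb : ∀ θ : ℝ, Complex.exp ((j * Complex.I) * θ) *
        (((1/(2*π) : ℝ) : ℂ)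
          * (if k ≤ 0 then ψ ^ (-k).toNat else (starRingEnd ℂ) ψ ^ k.toNat)
          * Complex.exp ((k * Complex.I) * θ))
      = (((1/(2*π) : ℝ) : ℂ)
          * (if k ≤ 0 then ψ ^ (-k).toNat else (starRingEnd ℂ) ψ ^ k.toNat))
          * Complex.exp (((j + k : ℤ) * Complex.I) * θ) := by
    intro θ
    rw [show ((((j + k : ℤ)) : ℂ) * Complex.I) * θ
        = ((j : ℂ) * Complex.I) * θ + ((k : ℂ) * Complex.I) * θ by push_cast; ring]
    rw [Complex.exp_add]
    ring
  simp_rw [hcomb]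
  rw [hν, integral_const_mul, intE (j + k)]
  have hπC : (π:ℂ) ≠ 0 := by exact_mod_cast pi_ne_zero
  rcases eq_or_ne j (-k) with hj | hj
  · rw [if_pos hj, if_pos (by omega : j + k = 0)]
    subst hj
    rcases le_or_gt k 0 with hk | hk
    · rw [if_pos hk, if_pos (by omega : (0:ℤ) ≤ -k)]
      rw [show (-k).toNat = (-k).toNat from rfl]
      push_cast
      field_simp
    · rw [if_neg (not_le.mpr hk), if_neg (by omega : ¬ (0:ℤ) ≤ -k)]
      rw [show (-(-k)).toNat = k.toNat by omega]
      push_cast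
      field_simp
  · rw [if_neg hj, if_neg (by omega : ¬ j + k = 0)]
    simp
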